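/- arXiv:1504.02887 — 2 statements merged into one kernel-verified Lean document; each statement's English description precedes it below -/
import Mathlib

section
/- Let d ≥ 1 and n ≥ 1 be integers, let C : ℝ^d → ℝ be d times continuously differentiable on an open set containing [0,1]^d, and let 1 ≤ k ≤ d−1 and 1 ≤ j ≤ min(k,n). Then for every u = (u_1,…,u_d) with u_j ∈ (0,1) for all j, the partial derivative with respect to u_{k+1} of the map u ↦ ∑_{𝒫∈𝒮_{k,j}} ∏_{M∈𝒫} ∂_M C(u_1^{1/n},…,u_d^{1/n}) equals (1/n) · u_{k+1}^{1/n−1} · ∑_{𝒫∈𝒮_{k+1,j}, {k+1}∉𝒫} ∏_{M∈𝒫} ∂_M C(u_1^{1/n},…,u_d^{1/n}), where the inner sum ranges over all partitions of {1,…,k+1} into exactly j blocks such that {k+1} is not a singleton block of the partition. -/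
open scoped Classical

noncomputable section

/-- Partial derivative of `f : ℝ^d → ℝ` with respect to the `i`-th coordinate. -/
def coordPartial {d : ℕ} (i : Fin d) (f : (Fin d → ℝ) → ℝ) : (Fin d → ℝ) → ℝ :=
  fun x => deriv (fun t => f (Function.update x i t)) (x i)

/-- Mixed partial derivative `∂_M f`, taken once with respect to each coordinate in `M`
(in increasing order of the indices). -/
def mixedPartial {d : ℕ} (M : Finset (Fin d)) (f : (Fin d → ℝ) → ℝ) : (Fin d → ℝ) → ℝ :=
  (M.sort (· ≤ ·)).foldr coordPartial f

/-- The iterated mixed partial derivative `∂^k/∂u₁⋯∂u_k` with respect to the first `k`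
coordinates. -/
def iterPartial {d : ℕ} (k : ℕ) (f : (Fin d → ℝ) → ℝ) : (Fin d → ℝ) → ℝ :=
  ((List.finRange d).take k).foldr coordPartial f

/-- `𝒮_{s,j}`: the set of set-partitions of the ground set `s` into exactly `j` nonempty
blocks, encoded as finsets of pairwise disjoint nonempty blocks whose union is `s`. -/
def setPartitions {d : ℕ} (s : Finset (Fin d)) (j : ℕ) : Finset (Finset (Finset (Fin d))) :=
  Finset.univ.filter fun P =>
    (↑P : Set (Finset (Fin d))).PairwiseDisjoint id ∧
    (∀ M ∈ P, M.Nonempty) ∧ P.sup id = s ∧ P.card = j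

variable {d : ℕ} {U : Set (Fin d → ℝ)} {f g : (Fin d → ℝ) → ℝ}

lemma hasDerivAt_update_comp (x : Fin d → ℝ) (i : Fin d) (hf : DifferentiableAt ℝ f x) :
    HasDerivAt (fun t => f (Function.update x i t)) (fderiv ℝ f x (Pi.single i 1)) (x i) := by
  have hup : Function.update x i (x i) = x := Function.update_eq_self i x
  have hf' : HasFDerivAt f (fderiv ℝ f x) (Function.update x i (x i)) := by
    rw [hup]; exact hf.hasFDerivAt
  have h := hf'.comp_hasDerivAt (x i) (hasDerivAt_update x i (x i))
  exact h

lemma coordPartial_eq_fderiv (x : Fin d → ℝ) (i : Fin d) (hf : DifferentiableAt ℝ f x) :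
    coordPartial i f x = fderiv ℝ f x (Pi.single i 1) :=
  (hasDerivAt_update_comp x i hf).deriv

lemma contDiffOn_coordPartial {m : ℕ} (hU : IsOpen U) (i : Fin d)
    (hf : ContDiffOn ℝ (m + 1 : ℕ) f U) : ContDiffOn ℝ (m : ℕ) (coordPartial i f) U := by
  have hfd : ContDiffOn ℝ (m : ℕ) (fderiv ℝ f) U := by
    apply hf.fderiv_of_isOpen hU
    norm_cast
  have : ContDiffOn ℝ (m : ℕ) (fun x => fderiv ℝ f x (Pi.single i 1)) U :=
    hfd.clm_apply contDiffOn_const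
  exact this.congr fun x hx => coordPartial_eq_fderiv x i <|
    (hf.contDiffAt (hU.mem_nhds hx)).differentiableAt (by simp)

lemma contDiffOn_foldr {m : ℕ} (hU : IsOpen U) (l : List (Fin d))
    (hf : ContDiffOn ℝ (m + l.length : ℕ) f U) :
    ContDiffOn ℝ (m : ℕ) (l.foldr coordPartial f) U := by
  induction l generalizing m with
  | nil => simpa using hf
  | cons a l ih =>
      have : ContDiffOn ℝ (m + 1 : ℕ) (l.foldr coordPartial f) U := by
        apply ih
        convert hf using 2
        simp; omega
      exact contDiffOn_coordPartial hU a this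

lemma coordPartial_congr (hU : IsOpen U) {x : Fin d → ℝ} (hx : x ∈ U) (i : Fin d)
    (h : ∀ y ∈ U, f y = g y) : coordPartial i f x = coordPartial i g x := by
  have hc : Continuous (fun t : ℝ => Function.update x i t) := continuous_const.update i continuous_id
  have hev : (fun t => f (Function.update x i t)) =ᶠ[nhds (x i)] fun t => g (Function.update x i t) := by
    have : ∀ᶠ t in nhds (x i), Function.update x i t ∈ U := by
      have : Function.update x i (x i) ∈ U := by rwa [Function.update_eq_self]
      exact hc.continuousAt.eventually_mem (hU.mem_nhds this)
    filter_upwards [this] with t ht using h _ ht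
  exact hev.deriv_eq

lemma foldr_coordPartial_congr (hU : IsOpen U) (l : List (Fin d))
    (h : ∀ y ∈ U, f y = g y) :
    ∀ y ∈ U, l.foldr coordPartial f y = l.foldr coordPartial g y := by
  induction l with
  | nil => exact h
  | cons a l ih => exact fun y hy => coordPartial_congr hU hy a ih

lemma coordPartial_as_snd (hU : IsOpen U) {x : Fin d → ℝ} (hx : x ∈ U)
    (hf : ContDiffOn ℝ (2:ℕ) f U) (i l : Fin d) :
    coordPartial i (coordPartial l f) x
      = fderiv ℝ (fderiv ℝ f) x (Pi.single i 1) (Pi.single l 1) := by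
  have hf1 : ContDiffOn ℝ (1:ℕ) (fderiv ℝ f) U := hf.fderiv_of_isOpen hU (by norm_cast)
  have hfd : ∀ y ∈ U, DifferentiableAt ℝ f y := fun y hy =>
    (hf.contDiffAt (hU.mem_nhds hy)).differentiableAt (by norm_num)
  have hF1 : DifferentiableAt ℝ (fderiv ℝ f) x :=
    (hf1.contDiffAt (hU.mem_nhds hx)).differentiableAt (by norm_num)
  -- coordPartial l f agrees with y ↦ fderiv f y e_l on U
  have hagree : ∀ y ∈ U, coordPartial l f y = fderiv ℝ f y (Pi.single l 1) :=
    fun y hy => coordPartial_eq_fderiv y l (hfd y hy)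
  have hder : HasFDerivAt (fun y => fderiv ℝ f y (Pi.single l 1))
      ((ContinuousLinearMap.apply ℝ ℝ (Pi.single l (1:ℝ))).comp (fderiv ℝ (fderiv ℝ f) x)) x := by
    have h := ((ContinuousLinearMap.apply ℝ ℝ (Pi.single l (1:ℝ))).hasFDerivAt).comp x hF1.hasFDerivAt
    exact h
  have hcd : coordPartial i (coordPartial l f) x
      = coordPartial i (fun y => fderiv ℝ f y (Pi.single l 1)) x :=
    coordPartial_congr hU hx i hagree
  rw [hcd, coordPartial_eq_fderiv x i hder.differentiableAt, hder.fderiv]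
  rfl

lemma coordPartial_comm (hU : IsOpen U) {x : Fin d → ℝ} (hx : x ∈ U)
    (hf : ContDiffOn ℝ (2:ℕ) f U) (i l : Fin d) :
    coordPartial i (coordPartial l f) x = coordPartial l (coordPartial i f) x := by
  rw [coordPartial_as_snd hU hx hf i l, coordPartial_as_snd hU hx hf l i]
  exact (hf.contDiffAt (hU.mem_nhds hx)).isSymmSndFDerivAt (by simp) _ _

lemma coordPartial_foldr_comm (hU : IsOpen U) (K : Fin d) :
    ∀ (l : List (Fin d)) (f : (Fin d → ℝ) → ℝ), ContDiffOn ℝ (l.length + 1 : ℕ) f U →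
    ∀ x ∈ U, coordPartial K (l.foldr coordPartial f) x
      = l.foldr coordPartial (coordPartial K f) x := by
  intro l
  induction l with
  | nil => intro f _ x _; rfl
  | cons a l ih =>
      intro f hf x hx
      have hh : ContDiffOn ℝ (2:ℕ) (l.foldr coordPartial f) U := by
        apply contDiffOn_foldr hU
        convert hf using 2
        simp; omega
      have h1 : coordPartial K (coordPartial a (l.foldr coordPartial f)) x
          = coordPartial a (coordPartial K (l.foldr coordPartial f)) x :=
        coordPartial_comm hU hx hh K a
      have h2 : ∀ y ∈ U, coordPartial K (l.foldr coordPartial f) y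
          = l.foldr coordPartial (coordPartial K f) y :=
        ih f (hf.of_le (by exact_mod_cast by simp)) 
      simpa [List.foldr] using h1.trans (coordPartial_congr hU hx a h2)


lemma sort_insert_max (M : Finset (Fin d)) (K : Fin d) (h : ∀ a ∈ M, a < K) :
    (insert K M).sort (· ≤ ·) = M.sort (· ≤ ·) ++ [K] := by
  have hK : K ∉ M := fun hKM => lt_irrefl K (h K hKM)
  refine (fun (hp : List.Perm _ _) h1 h2 => List.Perm.eq_of_pairwise' (r := fun a b : Fin d => a ≤ b) h1 h2 hp) ?_ ?_ ?_
  · apply List.perm_of_nodup_nodup_toFinset_eq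
    · exact Finset.sort_nodup _ _
    · refine List.Nodup.append (Finset.sort_nodup _ _) (List.nodup_singleton K) ?_
      intro a ha hb
      simp only [List.mem_singleton] at hb
      subst hb
      exact hK ((Finset.mem_sort _).1 ha)
    · ext a
      simp [Finset.mem_sort, or_comm]
  · exact Finset.pairwise_sort _ _
  · refine List.pairwise_append.2 ⟨Finset.pairwise_sort _ _, List.pairwise_singleton _ K, ?_⟩
    intro a ha b hb
    simp only [List.mem_singleton] at hb
    subst hb
    exact (h a ((Finset.mem_sort _).1 ha)).le

lemma mixedPartial_insert_max (M : Finset (Fin d)) (K : Fin d) (h : ∀ a ∈ M, a < K) :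
    mixedPartial (insert K M) f = mixedPartial M (coordPartial K f) := by
  unfold mixedPartial
  rw [sort_insert_max M K h, List.foldr_append]
  rfl

lemma coordPartial_mixedPartial (hU : IsOpen U) {x : Fin d → ℝ} (hx : x ∈ U)
    (M : Finset (Fin d)) (K : Fin d) (h : ∀ a ∈ M, a < K)
    (hf : ContDiffOn ℝ (M.card + 1 : ℕ) f U) :
    coordPartial K (mixedPartial M f) x = mixedPartial (insert K M) f x := by
  rw [mixedPartial_insert_max M K h]
  unfold mixedPartial
  exact coordPartial_foldr_comm hU K _ f (by rwa [Finset.length_sort]) x hx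




variable {d : ℕ}

lemma mem_setPartitions {s : Finset (Fin d)} {j : ℕ} {P : Finset (Finset (Fin d))} :
    P ∈ setPartitions s j ↔
      (↑P : Set (Finset (Fin d))).PairwiseDisjoint id ∧
      (∀ M ∈ P, M.Nonempty) ∧ P.sup id = s ∧ P.card = j := by
  simp [setPartitions]

lemma block_subset {s : Finset (Fin d)} {j : ℕ} {P : Finset (Finset (Fin d))}
    (hP : P ∈ setPartitions s j) {M : Finset (Fin d)} (hM : M ∈ P) : M ⊆ s := by
  rw [mem_setPartitions] at hP
  rw [← hP.2.2.1]
  exact Finset.le_sup (f := id) hM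

lemma partition_sum_bij (S : Finset (Fin d)) (K : Fin d) (hK : K ∉ S) (j : ℕ)
    (D : Finset (Fin d) → ℝ) :
    ∑ P ∈ setPartitions S j, ∑ M ∈ P, D (insert K M) * ∏ M' ∈ P.erase M, D M'
      = ∑ P ∈ (setPartitions (insert K S) j).filter (fun P => {K} ∉ P),
          ∏ M ∈ P, D M := by
  rw [Finset.sum_sigma']
  refine Finset.sum_bij (fun x _ => insert (insert K x.2) (x.1.erase x.2)) ?_ ?_ ?_ ?_
  · -- maps into target
    rintro ⟨P, M⟩ hx
    rw [Finset.mem_sigma] at hx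
    obtain ⟨hP, hM⟩ := hx
    dsimp only at hP hM ⊢
    have hMS : M ⊆ S := block_subset hP hM
    have hKM : K ∉ M := fun h => hK (hMS h)
    rw [mem_setPartitions] at hP
    obtain ⟨hPd, hPne, hPsup, hPcard⟩ := hP
    have hKnot : ∀ B ∈ P, K ∉ B := by
      intro B hB hKB
      exact hK (by rw [← hPsup]; exact Finset.le_sup (f := id) hB hKB)
    have hAnot : insert K M ∉ P.erase M := by
      intro h
      exact hKnot _ (Finset.mem_of_mem_erase h) (Finset.mem_insert_self _ _)
    rw [Finset.mem_filter, mem_setPartitions]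
    refine ⟨⟨?_, ?_, ?_, ?_⟩, ?_⟩
    · -- pairwise disjoint
      intro B1 h1 B2 h2 hne
      simp only [Finset.coe_insert, Set.mem_insert_iff, Finset.mem_coe] at h1 h2
      rcases h1 with rfl | h1 <;> rcases h2 with rfl | h2
      · exact absurd rfl hne
      · have hMB2 : M ≠ B2 := fun h => (Finset.mem_erase.1 (h ▸ h2)).1 rfl
        have := hPd hM (Finset.mem_of_mem_erase h2) hMB2
        simp only [Function.onFun, id] at this ⊢
        rw [Finset.disjoint_insert_left]
        exact ⟨hKnot _ (Finset.mem_of_mem_erase h2), this⟩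
      · have hMB1 : M ≠ B1 := fun h => (Finset.mem_erase.1 (h ▸ h1)).1 rfl
        have := hPd hM (Finset.mem_of_mem_erase h1) hMB1
        simp only [Function.onFun, id] at this ⊢
        rw [Finset.disjoint_insert_right]
        exact ⟨hKnot _ (Finset.mem_of_mem_erase h1), this.symm⟩
      · exact hPd (Finset.mem_of_mem_erase h1) (Finset.mem_of_mem_erase h2) hne
    · intro B hB
      rcases Finset.mem_insert.1 hB with rfl | hB
      · exact Finset.insert_nonempty _ _
      · exact hPne _ (Finset.mem_of_mem_erase hB)
    · rw [Finset.sup_insert]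
      have h5 : P.sup id = M ⊔ (P.erase M).sup id := by
        conv_lhs => rw [← Finset.insert_erase hM]
        rw [Finset.sup_insert]
        rfl
      simp only [Function.onFun, id, Finset.sup_eq_union] at h5 ⊢
      rw [Finset.insert_union, ← h5, hPsup]
    · rw [Finset.card_insert_of_notMem hAnot, Finset.card_erase_of_mem hM]
      have : 1 ≤ P.card := Finset.card_pos.2 ⟨M, hM⟩
      omega
    · -- {K} not a block
      intro h
      rcases Finset.mem_insert.1 h with h | h
      · obtain ⟨a, ha⟩ := hPne M hM
        have : a ∈ ({K} : Finset (Fin d)) := h ▸ Finset.mem_insert_of_mem ha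
        exact hKM ((Finset.mem_singleton.1 this) ▸ ha)
      · exact hKnot _ (Finset.mem_of_mem_erase h) (Finset.mem_singleton_self K)
  · -- injective
    rintro ⟨P1, M1⟩ h1 ⟨P2, M2⟩ h2 heq
    rw [Finset.mem_sigma] at h1 h2
    simp only at heq
    obtain ⟨hP1, hM1⟩ := h1
    obtain ⟨hP2, hM2⟩ := h2
    dsimp only at hP1 hM1 hP2 hM2
    have hKM1 : K ∉ M1 := fun h => hK (block_subset hP1 hM1 h)
    have hKM2 : K ∉ M2 := fun h => hK (block_subset hP2 hM2 h)
    have hKnot1 : ∀ B ∈ P1, K ∉ B := fun B hB hKB =>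
      hK (block_subset hP1 hB hKB)
    have hKnot2 : ∀ B ∈ P2, K ∉ B := fun B hB hKB =>
      hK (block_subset hP2 hB hKB)
    -- derive pairwise disjointness of image from hP1's structure
    have hA1mem : insert K M1 ∈ insert (insert K M1) (P1.erase M1) := Finset.mem_insert_self _ _
    have hA2mem : insert K M2 ∈ insert (insert K M1) (P1.erase M1) := by
      rw [heq]; exact Finset.mem_insert_self _ _
    have hA12 : insert K M1 = insert K M2 := by
      rcases Finset.mem_insert.1 hA2mem with h | h
      · exact h.symm
      · exact absurd (Finset.mem_insert_self K M2) (hKnot1 _ (Finset.mem_of_mem_erase h))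
    have hMM : M1 = M2 := by
      have := congrArg (Finset.erase · K) hA12
      simpa [Finset.erase_insert, hKM1, hKM2] using this
    subst hMM
    have hA1not : insert K M1 ∉ P1.erase M1 := fun h =>
      hKnot1 _ (Finset.mem_of_mem_erase h) (Finset.mem_insert_self _ _)
    have hA2not : insert K M1 ∉ P2.erase M1 := fun h =>
      hKnot2 _ (Finset.mem_of_mem_erase h) (Finset.mem_insert_self _ _)
    have hPP : P1 = P2 := by
      have he : P1.erase M1 = P2.erase M1 := by
        have e1 : (insert (insert K M1) (P1.erase M1)).erase (insert K M1) = P1.erase M1 :=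
          Finset.erase_insert hA1not
        have e2 : (insert (insert K M1) (P2.erase M1)).erase (insert K M1) = P2.erase M1 :=
          Finset.erase_insert hA2not
        rw [← e1, ← e2, heq, hA12]
      rw [← Finset.insert_erase hM1, ← Finset.insert_erase hM2, he]
    subst hPP
    rfl
  · -- surjective
    intro P' hP'
    rw [Finset.mem_filter, mem_setPartitions] at hP'
    obtain ⟨⟨hPd, hPne, hPsup, hPcard⟩, hKsing⟩ := hP'
    have hKmem : K ∈ P'.sup id := by rw [hPsup]; exact Finset.mem_insert_self _ _
    obtain ⟨B, hB, hKB⟩ := Finset.mem_sup.1 hKmem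
    set M := B.erase K with hMdef
    have hMne : M.Nonempty := by
      rcases Finset.eq_empty_or_nonempty M with h | h
      · exfalso
        have : B = {K} := by
          apply Finset.eq_singleton_iff_unique_mem.2
          refine ⟨hKB, fun a ha => ?_⟩
          by_contra hne
          exact (Finset.notMem_empty a) (h ▸ Finset.mem_erase.2 ⟨hne, ha⟩)
        exact hKsing (this ▸ hB)
      · exact h
    have hMnot : M ∉ P'.erase B := by
      intro h
      have hMB : M ≠ B := (Finset.mem_erase.1 h).1
      have hdisj := hPd (Finset.mem_coe.2 (Finset.mem_of_mem_erase h)) hB hMB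
      obtain ⟨a, ha⟩ := hMne
      exact Finset.disjoint_left.1 hdisj ha (Finset.erase_subset K B ha)
    have hKerase : ∀ C ∈ P'.erase B, K ∉ C := by
      intro C hC hKC
      have hCB : C ≠ B := (Finset.mem_erase.1 hC).1
      exact Finset.disjoint_left.1 (hPd (Finset.mem_coe.2 (Finset.mem_of_mem_erase hC)) hB hCB) hKC hKB
    refine ⟨⟨insert M (P'.erase B), M⟩, ?_, ?_⟩
    · rw [Finset.mem_sigma]
      constructor
      · rw [mem_setPartitions]
        refine ⟨?_, ?_, ?_, ?_⟩
        · intro B1 h1 B2 h2 hne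
          simp only [Finset.coe_insert, Set.mem_insert_iff, Finset.mem_coe] at h1 h2
          rcases h1 with rfl | h1 <;> rcases h2 with rfl | h2
          · exact absurd rfl hne
          · -- B1 = M, B2 ∈ erase
            have hB2B : B2 ≠ B := (Finset.mem_erase.1 h2).1
            have hd := hPd hB (Finset.mem_coe.2 (Finset.mem_of_mem_erase h2)) (Ne.symm hB2B)
            simp only [Function.onFun, id] at hd ⊢
            exact hd.mono_left (Finset.erase_subset K B)
          · have hB1B : B1 ≠ B := (Finset.mem_erase.1 h1).1
            have hd := hPd (Finset.mem_coe.2 (Finset.mem_of_mem_erase h1)) hB hB1B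
            simp only [Function.onFun, id] at hd ⊢
            exact hd.mono_right (Finset.erase_subset K B)
          · exact hPd (Finset.mem_coe.2 (Finset.mem_of_mem_erase h1))
              (Finset.mem_coe.2 (Finset.mem_of_mem_erase h2)) hne
        · intro C hC
          rcases Finset.mem_insert.1 hC with rfl | hC
          · exact hMne
          · exact hPne _ (Finset.mem_of_mem_erase hC)
        · -- sup = S
          have hsup' : P'.sup id = B ⊔ (P'.erase B).sup id := by
            conv_lhs => rw [← Finset.insert_erase hB]
            rw [Finset.sup_insert]
            rfl
          ext a
          rw [Finset.sup_insert]
          simp only [Function.onFun, id, Finset.sup_eq_union, Finset.mem_union] at hsup' ⊢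
          constructor
          · rintro (ha | ha)
            · have haB : a ∈ B := Finset.erase_subset K B ha
              have : a ∈ insert K S := by
                rw [← hPsup, hsup']
                exact Finset.mem_union_left _ haB
              rcases Finset.mem_insert.1 this with rfl | h
              · exact absurd rfl (Finset.mem_erase.1 ha).1
              · exact h
            · have : a ∈ insert K S := by
                rw [← hPsup, hsup']
                exact Finset.mem_union_right _ ha
              rcases Finset.mem_insert.1 this with rfl | h
              · exfalso
                obtain ⟨C, hC, haC⟩ := Finset.mem_sup.1 ha
                exact hKerase C hC haC
              · exact h
          · intro ha
            have haK : a ≠ K := fun h => hK (h ▸ ha)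
            have : a ∈ P'.sup id := by rw [hPsup]; exact Finset.mem_insert_of_mem ha
            rw [hsup', Finset.mem_union] at this
            rcases this with h | h
            · exact Or.inl (Finset.mem_erase.2 ⟨haK, h⟩)
            · exact Or.inr h
        · rw [Finset.card_insert_of_notMem hMnot, Finset.card_erase_of_mem hB]
          have : 1 ≤ P'.card := Finset.card_pos.2 ⟨B, hB⟩
          omega
      · exact Finset.mem_insert_self _ _
    · -- image equals P'
      simp only
      have h1 : insert K M = B := Finset.insert_erase hKB
      have h2 : (insert M (P'.erase B)).erase M = P'.erase B := Finset.erase_insert hMnot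
      rw [h1, h2, Finset.insert_erase hB]
  · -- values
    rintro ⟨P, M⟩ hx
    rw [Finset.mem_sigma] at hx
    obtain ⟨hP, hM⟩ := hx
    have hAnot : insert K M ∉ P.erase M := by
      intro h
      have : K ∈ S := block_subset hP (Finset.mem_of_mem_erase h) (Finset.mem_insert_self _ _)
      exact hK this
    rw [Finset.prod_insert hAnot]


section Main
variable {d : ℕ} {U : Set (Fin d → ℝ)}

lemma card_filter_lt (d k : ℕ) (hkd : k ≤ d) :
    (Finset.univ.filter (fun i : Fin d => (i : ℕ) < k)).card = k := by
  have : Finset.univ.filter (fun i : Fin d => (i : ℕ) < k)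
      = Finset.map (Fin.castLEEmb hkd) Finset.univ := by
    ext i
    simp only [Finset.mem_filter, Finset.mem_univ, true_and, Finset.mem_map,
      Fin.castLEEmb, Function.Embedding.coeFn_mk]
    constructor
    · intro h
      exact ⟨⟨i.val, h⟩, by simp [Fin.castLE, Fin.ext_iff]⟩
    · rintro ⟨a, rfl⟩
      exact a.isLt
  rw [this, Finset.card_map, Finset.card_univ, Fintype.card_fin]

end Main


/-- Equation (8) of the paper: for `1 ≤ k ≤ d-1` and `1 ≤ j ≤ min(k,n)`,
the partial derivative with respect to `u_{k+1}` of
`u ↦ ∑_{𝒫∈𝒮_{k,j}} ∏_{M∈𝒫} ∂_M C(u₁^{1/n},…,u_d^{1/n})` equals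
`(1/n) u_{k+1}^{1/n-1} ∑_{𝒫∈𝒮_{k+1,j}, {k+1}∉𝒫} ∏_{M∈𝒫} ∂_M C(u^{1/n})`,
where the sum ranges over partitions of `{1,…,k+1}` into `j` blocks for which `{k+1}`
is not a singleton block. (Here `u_{k+1}` is the coordinate of index `k` in `Fin d`.) -/
theorem blockMaxima_partition_sum_deriv (d n k j : ℕ) (hn : 1 ≤ n)
    (hk : 1 ≤ k) (hkd : k + 1 ≤ d) (hj : 1 ≤ j) (hjkn : j ≤ min k n)
    (C : (Fin d → ℝ) → ℝ)
    (U : Set (Fin d → ℝ)) (hU : IsOpen U) (hUsub : Set.Icc (0 : Fin d → ℝ) 1 ⊆ U)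
    (hC : ContDiffOn ℝ d C U)
    (u : Fin d → ℝ) (hu : ∀ i, u i ∈ Set.Ioo (0:ℝ) 1) :
    coordPartial (⟨k, by omega⟩ : Fin d)
        (fun v => ∑ P ∈ setPartitions (Finset.univ.filter (fun i : Fin d => (i : ℕ) < k)) j,
          ∏ M ∈ P, mixedPartial M C (fun i => v i ^ ((1:ℝ)/n))) u =
      (1 / (n : ℝ)) * u (⟨k, by omega⟩ : Fin d) ^ ((1:ℝ)/n - 1) *
        ∑ P ∈ (setPartitions (Finset.univ.filter (fun i : Fin d => (i : ℕ) < k + 1)) j).filter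
            (fun P => {(⟨k, by omega⟩ : Fin d)} ∉ P),
          ∏ M ∈ P, mixedPartial M C (fun i => u i ^ ((1:ℝ)/n)) := by
  have hK' : k < d := by omega
  set K : Fin d := ⟨k, by omega⟩ with hKdef
  set q : ℝ := (1:ℝ)/n with hqdef
  set x : Fin d → ℝ := fun i => u i ^ q with hxdef
  set S : Finset (Fin d) := Finset.univ.filter (fun i : Fin d => (i : ℕ) < k) with hSdef
  have hxU : x ∈ U := by
    apply hUsub
    rw [Set.mem_Icc]
    constructor <;> (rw [Pi.le_def]; intro i)
    · exact Real.rpow_nonneg (le_of_lt (hu i).1) q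
    · exact Real.rpow_le_one (le_of_lt (hu i).1) (le_of_lt (hu i).2) (by positivity)
  have hKS : K ∉ S := by simp [hSdef, hKdef]
  have hS1 : insert K S = Finset.univ.filter (fun i : Fin d => (i : ℕ) < k + 1) := by
    ext i
    simp only [Finset.mem_insert, hSdef, Finset.mem_filter, Finset.mem_univ, true_and,
      hKdef, Fin.ext_iff]
    omega
  have hcardS : S.card = k := card_filter_lt d k (by omega)
  have hlt : ∀ M : Finset (Fin d), M ⊆ S → ∀ a ∈ M, a < K := by
    intro M hMS a ha
    have := hMS ha
    rw [hSdef, Finset.mem_filter] at this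
    exact Fin.lt_def.2 this.2
  have hMcard : ∀ M : Finset (Fin d), M ⊆ S → M.card ≤ k := by
    intro M hMS
    rw [← hcardS]
    exact Finset.card_le_card hMS
  have hsmooth : ∀ M : Finset (Fin d), M ⊆ S → ContDiffOn ℝ (1:ℕ) (mixedPartial M C) U := by
    intro M hMS
    have h1 : ContDiffOn ℝ ((1 + (M.sort (· ≤ ·)).length : ℕ)) C U := by
      apply hC.of_le
      rw [Finset.length_sort]
      have h2 : 1 + M.card ≤ d := by have := hMcard M hMS; omega
      exact_mod_cast h2
    exact contDiffOn_foldr hU _ h1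
  have hdiff : ∀ M : Finset (Fin d), M ⊆ S → DifferentiableAt ℝ (mixedPartial M C) x := by
    intro M hMS
    exact ((hsmooth M hMS).contDiffAt (hU.mem_nhds hxU)).differentiableAt (by norm_num)
  have hfd : ∀ M : Finset (Fin d), M ⊆ S →
      fderiv ℝ (mixedPartial M C) x (Pi.single K 1) = mixedPartial (insert K M) C x := by
    intro M hMS
    rw [← coordPartial_eq_fderiv x K (hdiff M hMS)]
    apply coordPartial_mixedPartial hU hxU M K (hlt M hMS)
    apply hC.of_le
    have h2 : M.card + 1 ≤ d := by have := hMcard M hMS; omega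
    exact_mod_cast h2
  -- derivative of the inner sum wrt coordinate K at x
  have hG : HasDerivAt
      (fun s => ∑ P ∈ setPartitions S j, ∏ M ∈ P, mixedPartial M C (Function.update x K s))
      (∑ P ∈ setPartitions S j, ∑ M ∈ P,
        (∏ M' ∈ P.erase M, mixedPartial M' C x) * mixedPartial (insert K M) C x) (x K) := by
    apply HasDerivAt.fun_sum
    intro P hP
    have hfac : ∀ M ∈ P, HasDerivAt (fun s => mixedPartial M C (Function.update x K s))
        (mixedPartial (insert K M) C x) (x K) := by
      intro M hM
      have hMS : M ⊆ S := block_subset hP hM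
      have h := hasDerivAt_update_comp x K (hdiff M hMS)
      rwa [hfd M hMS] at h
    have hprod := HasDerivAt.fun_finsetProd hfac
    rw [Function.update_eq_self] at hprod
    have hval : (∑ M ∈ P, (∏ M' ∈ P.erase M, mixedPartial M' C x) * mixedPartial (insert K M) C x)
        = ∑ M ∈ P, (∏ M' ∈ P.erase M, mixedPartial M' C x) • mixedPartial (insert K M) C x := by
      simp only [smul_eq_mul]
    rw [hval]
    exact hprod
  have hrpow : HasDerivAt (fun t : ℝ => t ^ q) (q * (u K) ^ (q - 1)) (u K) :=
    Real.hasDerivAt_rpow_const (Or.inl (ne_of_gt (hu K).1))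
  have hcomp := hG.comp (u K) hrpow
  have hupdate : ∀ t : ℝ, (fun i => Function.update u K t i ^ q) = Function.update x K (t ^ q) := by
    intro t
    funext i
    rcases eq_or_ne i K with rfl | h
    · simp
    · simp [Function.update_apply, h, hxdef]
  have hLHS : coordPartial K
      (fun v => ∑ P ∈ setPartitions S j, ∏ M ∈ P, mixedPartial M C (fun i => v i ^ q)) u
      = deriv ((fun s => ∑ P ∈ setPartitions S j,
          ∏ M ∈ P, mixedPartial M C (Function.update x K s)) ∘ (fun t : ℝ => t ^ q)) (u K) := by
    simp only [coordPartial, Function.comp]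
    congr 1
    funext t
    rw [hupdate t]
    rfl
  rw [hLHS, hcomp.deriv]
  have hbij := partition_sum_bij S K hKS j (fun M => mixedPartial M C x)
  have hG'eq : (∑ P ∈ setPartitions S j, ∑ M ∈ P,
        (∏ M' ∈ P.erase M, mixedPartial M' C x) * mixedPartial (insert K M) C x)
      = ∑ P ∈ ((setPartitions (insert K S) j).filter (fun P => {K} ∉ P)),
          ∏ M ∈ P, mixedPartial M C x := by
    rw [← hbij]
    exact Finset.sum_congr rfl fun P _ => Finset.sum_congr rfl fun M _ => mul_comm _ _
  rw [hG'eq, hS1]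
  ring

end
end

section
/- For all (u_1,u_2,u_3) with u_1 ∈ (0,1) and u_2,u_3 ∈ [0,1], the partial derivative of the three-dimensional vine copula C with respect to u_1 satisfies ∂C(u_1,u_2,u_3)/∂u_1 = ∫_0^{u_2} ∂₁C_{13;2}( C_{1|2}(u_1|v_2), C_{3|2}(u_3|v_2) ) · c_{12}(u_1,v_2) dv_2. -/
noncomputable section

/-- The density of a bivariate copula: the mixed second partial derivative `∂²C/∂s∂t`. -/
def copDens (C : ℝ × ℝ → ℝ) (s t : ℝ) : ℝ :=
  deriv (fun a => deriv (fun b => C (a, b)) t) s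

/-- The conditional distribution function `C_{1|2}(u₁|u₂) = ∂C₁₂(u₁,u₂)/∂u₂`. -/
def cond12 (C12 : ℝ × ℝ → ℝ) (u1 u2 : ℝ) : ℝ :=
  deriv (fun b => C12 (u1, b)) u2

/-- The conditional distribution function `C_{3|2}(u₃|u₂) = ∂C₂₃(u₂,u₃)/∂u₂`. -/
def cond32 (C23 : ℝ × ℝ → ℝ) (u3 u2 : ℝ) : ℝ :=
  deriv (fun a => C23 (a, u3)) u2

/-- `∂₁C(x,y) = ∂C(x,y)/∂x`. -/
def pdFst (C : ℝ × ℝ → ℝ) (x y : ℝ) : ℝ := deriv (fun a => C (a, y)) x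

/-- `∂₃C(x,y) = ∂C(x,y)/∂y` (derivative in the second argument). -/
def pdSnd (C : ℝ × ℝ → ℝ) (x y : ℝ) : ℝ := deriv (fun b => C (x, b)) y

/-- The three-dimensional vine copula built from the pair copulas `C₁₂, C₂₃, C₁₃;₂`:
`C(u₁,u₂,u₃) = ∫₀^{u₁}∫₀^{u₂}∫₀^{u₃} c₁₂(v₁,v₂) c₂₃(v₂,v₃)
  c₁₃;₂(C_{1|2}(v₁|v₂), C_{3|2}(v₃|v₂)) dv₃ dv₂ dv₁`. -/
def vine (C12 C23 C132 : ℝ × ℝ → ℝ) (u1 u2 u3 : ℝ) : ℝ :=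
  ∫ v1 in (0:ℝ)..u1, ∫ v2 in (0:ℝ)..u2, ∫ v3 in (0:ℝ)..u3,
    copDens C12 v1 v2 * copDens C23 v2 v3 *
      copDens C132 (cond12 C12 v1 v2) (cond32 C23 v3 v2)

/-! ### Auxiliary lemmas -/

open Set MeasureTheory intervalIntegral

section vineHelpers

variable {C : ℝ × ℝ → ℝ} {U : Set (ℝ × ℝ)} {s t x y : ℝ}

lemma vineAux_hd_snd (h : DifferentiableAt ℝ C (s, t)) :
    HasDerivAt (fun b => C (s, b)) (fderiv ℝ C (s, t) (0, 1)) t := by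
  have h1 : HasDerivAt (fun b : ℝ => ((s : ℝ), b)) (0, 1) t :=
    (hasDerivAt_const t s).prodMk (hasDerivAt_id t)
  exact h.hasFDerivAt.comp_hasDerivAt t h1

lemma vineAux_hd_fst (h : DifferentiableAt ℝ C (s, t)) :
    HasDerivAt (fun a => C (a, t)) (fderiv ℝ C (s, t) (1, 0)) s := by
  have h1 : HasDerivAt (fun a : ℝ => (a, (t : ℝ))) (1, 0) s :=
    (hasDerivAt_id s).prodMk (hasDerivAt_const s t)
  exact h.hasFDerivAt.comp_hasDerivAt s h1

lemma vineAux_diffAt (hU : IsOpen U) (hC : ContDiffOn ℝ 2 C U) {p : ℝ × ℝ} (hp : p ∈ U) :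
    DifferentiableAt ℝ C p :=
  (hC.contDiffAt (hU.mem_nhds hp)).differentiableAt two_ne_zero

lemma vineAux_fderiv_diffAt (hU : IsOpen U) (hC : ContDiffOn ℝ 2 C U) {p : ℝ × ℝ}
    (hp : p ∈ U) : DifferentiableAt ℝ (fderiv ℝ C) p :=
  (((hC.fderiv_of_isOpen hU (m := 1) (by norm_num)).contDiffAt (hU.mem_nhds hp)).differentiableAt
    one_ne_zero)

lemma vineAux_hd2_fst (hU : IsOpen U) (hC : ContDiffOn ℝ 2 C U) (hp : (s, t) ∈ U) (w : ℝ × ℝ) :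
    HasDerivAt (fun a => fderiv ℝ C (a, t) w)
      (fderiv ℝ (fderiv ℝ C) (s, t) (1, 0) w) s := by
  have hA : HasFDerivAt (fun q : ℝ × ℝ => fderiv ℝ C q w)
      ((ContinuousLinearMap.apply ℝ ℝ w).comp (fderiv ℝ (fderiv ℝ C) (s, t))) (s, t) :=
    (ContinuousLinearMap.apply ℝ ℝ w).hasFDerivAt.comp (s, t)
      (vineAux_fderiv_diffAt hU hC hp).hasFDerivAt
  have h1 : HasDerivAt (fun a : ℝ => (a, (t : ℝ))) (1, 0) s :=
    (hasDerivAt_id s).prodMk (hasDerivAt_const s t)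
  exact hA.comp_hasDerivAt s h1

lemma vineAux_hd2_snd (hU : IsOpen U) (hC : ContDiffOn ℝ 2 C U) (hp : (s, t) ∈ U) (w : ℝ × ℝ) :
    HasDerivAt (fun b => fderiv ℝ C (s, b) w)
      (fderiv ℝ (fderiv ℝ C) (s, t) (0, 1) w) t := by
  have hA : HasFDerivAt (fun q : ℝ × ℝ => fderiv ℝ C q w)
      ((ContinuousLinearMap.apply ℝ ℝ w).comp (fderiv ℝ (fderiv ℝ C) (s, t))) (s, t) :=
    (ContinuousLinearMap.apply ℝ ℝ w).hasFDerivAt.comp (s, t)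
      (vineAux_fderiv_diffAt hU hC hp).hasFDerivAt
  have h1 : HasDerivAt (fun b : ℝ => ((s : ℝ), b)) (0, 1) t :=
    (hasDerivAt_const t s).prodMk (hasDerivAt_id t)
  exact hA.comp_hasDerivAt t h1

lemma vineAux_sndSymm (hU : IsOpen U) (hC : ContDiffOn ℝ 2 C U) {p : ℝ × ℝ} (hp : p ∈ U)
    (v w : ℝ × ℝ) :
    fderiv ℝ (fderiv ℝ C) p v w = fderiv ℝ (fderiv ℝ C) p w v :=
  ((hC.contDiffAt (hU.mem_nhds hp)).isSymmSndFDerivAt (by norm_num)) v w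

lemma vineAux_copDens_eq (hU : IsOpen U) (hC : ContDiffOn ℝ 2 C U) (hp : (s, t) ∈ U) :
    copDens C s t = fderiv ℝ (fderiv ℝ C) (s, t) (1, 0) (0, 1) := by
  have hmem : ∀ᶠ a in nhds s, (a, t) ∈ U := by
    have hc : Continuous fun a : ℝ => (a, (t : ℝ)) := continuous_id.prodMk continuous_const
    exact hc.continuousAt.preimage_mem_nhds (hU.mem_nhds hp)
  have hev : (fun a => deriv (fun b => C (a, b)) t) =ᶠ[nhds s]
      fun a => fderiv ℝ C (a, t) (0, 1) := by
    filter_upwards [hmem] with a ha using (vineAux_hd_snd (vineAux_diffAt hU hC ha)).deriv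
  rw [copDens, hev.deriv_eq]
  exact (vineAux_hd2_fst hU hC hp (0, 1)).deriv

lemma vineAux_cond12_eq (hU : IsOpen U) (hC : ContDiffOn ℝ 2 C U) (hp : (s, t) ∈ U) :
    cond12 C s t = fderiv ℝ C (s, t) (0, 1) := (vineAux_hd_snd (vineAux_diffAt hU hC hp)).deriv

lemma vineAux_cond32_eq (hU : IsOpen U) (hC : ContDiffOn ℝ 2 C U) (hp : (t, s) ∈ U) :
    cond32 C s t = fderiv ℝ C (t, s) (1, 0) := (vineAux_hd_fst (vineAux_diffAt hU hC hp)).deriv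

lemma vineAux_pdFst_eq (hU : IsOpen U) (hC : ContDiffOn ℝ 2 C U) (hp : (x, y) ∈ U) :
    pdFst C x y = fderiv ℝ C (x, y) (1, 0) := (vineAux_hd_fst (vineAux_diffAt hU hC hp)).deriv

lemma vineAux_hasDerivAt_pdFst_snd (hU : IsOpen U) (hC : ContDiffOn ℝ 2 C U)
    (hp : (x, y) ∈ U) :
    HasDerivAt (fun b => pdFst C x b) (copDens C x y) y := by
  have hmem : ∀ᶠ b in nhds y, (x, b) ∈ U := by
    have hc : Continuous fun b : ℝ => ((x : ℝ), b) := continuous_const.prodMk continuous_id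
    exact hc.continuousAt.preimage_mem_nhds (hU.mem_nhds hp)
  have hev : (fun b => fderiv ℝ C (x, b) (1, 0)) =ᶠ[nhds y] fun b => pdFst C x b := by
    filter_upwards [hmem] with b hb using (vineAux_pdFst_eq hU hC hb).symm
  have h := vineAux_hd2_snd hU hC hp (1, 0)
  rw [vineAux_copDens_eq hU hC hp, ← vineAux_sndSymm hU hC hp (0, 1) (1, 0)]
  exact h.congr_of_eventuallyEq hev.symm

lemma vineAux_hasDerivAt_cond32 (hU : IsOpen U) (hC : ContDiffOn ℝ 2 C U) (hp : (s, t) ∈ U) :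
    HasDerivAt (fun v3 => cond32 C v3 s) (copDens C s t) t := by
  have hmem : ∀ᶠ b in nhds t, (s, b) ∈ U := by
    have hc : Continuous fun b : ℝ => ((s : ℝ), b) := continuous_const.prodMk continuous_id
    exact hc.continuousAt.preimage_mem_nhds (hU.mem_nhds hp)
  have hev : (fun b => fderiv ℝ C (s, b) (1, 0)) =ᶠ[nhds t] fun b => cond32 C b s := by
    filter_upwards [hmem] with b hb using (vineAux_cond32_eq hU hC hb).symm
  have h := vineAux_hd2_snd hU hC hp (1, 0)
  rw [vineAux_copDens_eq hU hC hp, ← vineAux_sndSymm hU hC hp (0, 1) (1, 0)]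
  exact h.congr_of_eventuallyEq hev.symm

lemma vineAux_contOn_fderiv_apply (hU : IsOpen U) (hC : ContDiffOn ℝ 2 C U) (w : ℝ × ℝ) :
    ContinuousOn (fun p : ℝ × ℝ => fderiv ℝ C p w) U :=
  (hC.continuousOn_fderiv_of_isOpen hU one_le_two).clm_apply continuousOn_const

lemma vineAux_contOn_fderiv2_apply (hU : IsOpen U) (hC : ContDiffOn ℝ 2 C U) (v w : ℝ × ℝ) :
    ContinuousOn (fun p : ℝ × ℝ => fderiv ℝ (fderiv ℝ C) p v w) U :=
  (((hC.fderiv_of_isOpen hU (by norm_num)).continuousOn_fderiv_of_isOpen hU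
    (le_refl 1)).clm_apply continuousOn_const).clm_apply continuousOn_const

lemma vineAux_contOn_copDens (hU : IsOpen U) (hC : ContDiffOn ℝ 2 C U) :
    ContinuousOn (fun p : ℝ × ℝ => copDens C p.1 p.2) U :=
  (vineAux_contOn_fderiv2_apply hU hC (1, 0) (0, 1)).congr fun p hp =>
    vineAux_copDens_eq hU hC hp

/-- If `C` vanishes on the bottom edge of the unit square, then so does its first
partial derivative. -/
lemma vineAux_pdZero (hU : IsOpen U) (hC : ContDiffOn ℝ 2 C U)
    (hUsub : Set.Icc ((0 : ℝ), (0 : ℝ)) (1, 1) ⊆ U)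
    (hb : ∀ t ∈ Set.Icc (0:ℝ) 1, C (t, 0) = 0) :
    ∀ x ∈ Set.Icc (0:ℝ) 1, deriv (fun a => C (a, 0)) x = 0 := by
  have hmemU : ∀ z ∈ Icc (0:ℝ) 1, ((z : ℝ), (0 : ℝ)) ∈ U := fun z hz =>
    hUsub (by simp [Prod.le_def, hz.1, hz.2])
  have hEq : ∀ z ∈ Icc (0:ℝ) 1, deriv (fun a => C (a, 0)) z = fderiv ℝ C (z, 0) (1, 0) :=
    fun z hz => (vineAux_hd_fst (vineAux_diffAt hU hC (hmemU z hz))).deriv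
  set Q : ℝ → ℝ := fun z => fderiv ℝ C (z, 0) (1, 0) with hQdef
  have hQ0 : ∀ z ∈ Ioo (0:ℝ) 1, Q z = 0 := by
    intro z hz
    have hev : (fun a => C (a, 0)) =ᶠ[nhds z] fun _ => 0 := by
      filter_upwards [Ioo_mem_nhds hz.1 hz.2] with a ha using hb a (Ioo_subset_Icc_self ha)
    have : deriv (fun a => C (a, 0)) z = 0 := by rw [hev.deriv_eq]; exact deriv_const z 0
    exact ((hEq z (Ioo_subset_Icc_self hz)).symm.trans this :)
  have hQcont : ContinuousOn Q (Icc (0:ℝ) 1) := by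
    have h1 := vineAux_contOn_fderiv_apply hU hC ((1 : ℝ), (0 : ℝ))
    exact h1.comp ((continuous_id.prodMk continuous_const).continuousOn) hmemU
  intro x hx
  have hne : (nhdsWithin x (Ioo (0:ℝ) 1)).NeBot := by
    rw [← mem_closure_iff_nhdsWithin_neBot, closure_Ioo (by norm_num : (0:ℝ) ≠ 1)]
    exact hx
  have h1 : Filter.Tendsto Q (nhdsWithin x (Ioo (0:ℝ) 1)) (nhds (Q x)) :=
    (hQcont x hx).mono Ioo_subset_Icc_self
  have h2 : Filter.Tendsto Q (nhdsWithin x (Ioo (0:ℝ) 1)) (nhds 0) := by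
    apply Filter.Tendsto.congr' _ tendsto_const_nhds
    filter_upwards [self_mem_nhdsWithin] with z hz using (hQ0 z hz).symm
  rw [hEq x hx]
  exact tendsto_nhds_unique h1 h2

end vineHelpers

/-- ∂C(u₁,u₂,u₃)/∂u₁ = ∫₀^{u₂} ∂₁C₁₃;₂(C_{1|2}(u₁|v₂), C_{3|2}(u₃|v₂)) ⬝ c₁₂(u₁,v₂) dv₂. -/
theorem vine_partial_u1
    (C12 C23 C132 : ℝ × ℝ → ℝ)
    (U : Set (ℝ × ℝ)) (hU : IsOpen U)
    (hUsub : Set.Icc ((0 : ℝ), (0 : ℝ)) (1, 1) ⊆ U)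
    (h12 : ContDiffOn ℝ 2 C12 U) (h23 : ContDiffOn ℝ 2 C23 U)
    (h132 : ContDiffOn ℝ 2 C132 U)
    (hb12 : ∀ t ∈ Set.Icc (0:ℝ) 1, C12 (0, t) = 0 ∧ C12 (t, 0) = 0)
    (hb23 : ∀ t ∈ Set.Icc (0:ℝ) 1, C23 (0, t) = 0 ∧ C23 (t, 0) = 0)
    (hb132 : ∀ t ∈ Set.Icc (0:ℝ) 1, C132 (0, t) = 0 ∧ C132 (t, 0) = 0)
    (hr12 : ∀ u1 ∈ Set.Icc (0:ℝ) 1, ∀ u2 ∈ Set.Icc (0:ℝ) 1,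
      cond12 C12 u1 u2 ∈ Set.Icc (0:ℝ) 1)
    (hr32 : ∀ u3 ∈ Set.Icc (0:ℝ) 1, ∀ u2 ∈ Set.Icc (0:ℝ) 1,
      cond32 C23 u3 u2 ∈ Set.Icc (0:ℝ) 1)
    (u1 u2 u3 : ℝ) (hu1 : u1 ∈ Set.Ioo (0:ℝ) 1) (hu2 : u2 ∈ Set.Icc (0:ℝ) 1)
    (hu3 : u3 ∈ Set.Icc (0:ℝ) 1) :
    deriv (fun a => vine C12 C23 C132 a u2 u3) u1 =
      ∫ v2 in (0:ℝ)..u2,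
        pdFst C132 (cond12 C12 u1 v2) (cond32 C23 u3 v2) * copDens C12 u1 v2 := by
  have hu1' : u1 ∈ Icc (0:ℝ) 1 := ⟨hu1.1.le, hu1.2.le⟩
  have hmem : ∀ {a b : ℝ}, a ∈ Icc (0:ℝ) 1 → b ∈ Icc (0:ℝ) 1 → ((a, b) : ℝ × ℝ) ∈ U :=
    fun ha hb => hUsub (by simp [Prod.le_def, ha.1, ha.2, hb.1, hb.2])
  have hmemK : ∀ {a b : ℝ}, a ∈ Icc (0:ℝ) 1 → b ∈ Icc (0:ℝ) 1 →
      ((a, b) : ℝ × ℝ) ∈ Icc ((0 : ℝ), (0 : ℝ)) (1, 1) :=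
    fun ha hb => by simp [Prod.le_def, ha.1, ha.2, hb.1, hb.2]
  -- Step 1: the innermost integral computed by FTC
  have hFTC : ∀ v1 ∈ Icc (0:ℝ) 1, ∀ v2 ∈ Icc (0:ℝ) 1,
      (∫ v3 in (0:ℝ)..u3, copDens C12 v1 v2 * copDens C23 v2 v3 *
        copDens C132 (cond12 C12 v1 v2) (cond32 C23 v3 v2))
      = copDens C12 v1 v2 * pdFst C132 (cond12 C12 v1 v2) (cond32 C23 u3 v2) := by
    intro v1 hv1 v2 hv2
    set x := cond12 C12 v1 v2 with hxdef
    have hx : x ∈ Icc (0:ℝ) 1 := hr12 v1 hv1 v2 hv2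
    have hsub3 : uIcc (0:ℝ) u3 ⊆ Icc (0:ℝ) 1 := by
      rw [uIcc_of_le hu3.1]; exact Icc_subset_Icc le_rfl hu3.2
    have hderiv : ∀ v3 ∈ uIcc (0:ℝ) u3,
        HasDerivAt (fun b => pdFst C132 x (cond32 C23 b v2))
          (copDens C132 x (cond32 C23 v3 v2) * copDens C23 v2 v3) v3 := by
      intro v3 hv3
      have hv3' : v3 ∈ Icc (0:ℝ) 1 := hsub3 hv3
      have hy : cond32 C23 v3 v2 ∈ Icc (0:ℝ) 1 := hr32 v3 hv3' v2 hv2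
      exact (vineAux_hasDerivAt_pdFst_snd hU h132 (hmem hx hy)).comp v3
        (vineAux_hasDerivAt_cond32 hU h23 (hmem hv2 hv3'))
    have hcond32cont : ContinuousOn (fun v3 => cond32 C23 v3 v2) (uIcc (0:ℝ) u3) := by
      have h1 : ContinuousOn (fun v3 : ℝ => fderiv ℝ C23 (v2, v3) ((1:ℝ), (0:ℝ)))
          (uIcc (0:ℝ) u3) :=
        (vineAux_contOn_fderiv_apply hU h23 (1, 0)).comp
          ((continuous_const.prodMk continuous_id).continuousOn)
          (fun v3 hv3 => hmem hv2 (hsub3 hv3))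
      exact h1.congr fun v3 hv3 => vineAux_cond32_eq hU h23 (hmem hv2 (hsub3 hv3))
    have hcontInt : ContinuousOn
        (fun v3 => copDens C132 x (cond32 C23 v3 v2) * copDens C23 v2 v3)
        (uIcc (0:ℝ) u3) := by
      have h1 : ContinuousOn (fun v3 => copDens C132 x (cond32 C23 v3 v2))
          (uIcc (0:ℝ) u3) := by
        refine (vineAux_contOn_copDens hU h132).comp
          (continuousOn_const.prodMk hcond32cont) fun v3 hv3 => ?_
        exact hmem hx (hr32 v3 (hsub3 hv3) v2 hv2)
      have h2 : ContinuousOn (fun v3 => copDens C23 v2 v3) (uIcc (0:ℝ) u3) :=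
        (vineAux_contOn_copDens hU h23).comp
          ((continuous_const.prodMk continuous_id).continuousOn)
          (fun v3 hv3 => hmem hv2 (hsub3 hv3))
      exact h1.mul h2
    have hint : IntervalIntegrable
        (fun v3 => copDens C132 x (cond32 C23 v3 v2) * copDens C23 v2 v3) volume 0 u3 :=
      hcontInt.intervalIntegrable
    have key := intervalIntegral.integral_eq_sub_of_hasDerivAt hderiv hint
    have hzero32 : cond32 C23 0 v2 = 0 :=
      vineAux_pdZero hU h23 hUsub (fun t ht => (hb23 t ht).2) v2 hv2
    have hzeroPd : pdFst C132 x 0 = 0 :=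
      vineAux_pdZero hU h132 hUsub (fun t ht => (hb132 t ht).2) x hx
    calc (∫ v3 in (0:ℝ)..u3, copDens C12 v1 v2 * copDens C23 v2 v3 *
            copDens C132 x (cond32 C23 v3 v2))
        = ∫ v3 in (0:ℝ)..u3, copDens C12 v1 v2 *
            (copDens C132 x (cond32 C23 v3 v2) * copDens C23 v2 v3) :=
          intervalIntegral.integral_congr fun v3 _ => by ring
      _ = copDens C12 v1 v2 * ∫ v3 in (0:ℝ)..u3,
            copDens C132 x (cond32 C23 v3 v2) * copDens C23 v2 v3 :=
          intervalIntegral.integral_const_mul _ _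
      _ = copDens C12 v1 v2 * pdFst C132 x (cond32 C23 u3 v2) := by
          rw [key, hzero32, hzeroPd, sub_zero]
  -- Step 2: joint continuity of the integrand on the unit square
  have hKmem : ∀ p ∈ Icc ((0 : ℝ), (0 : ℝ)) (1, 1),
      p.1 ∈ Icc (0:ℝ) 1 ∧ p.2 ∈ Icc (0:ℝ) 1 := by
    intro p hp
    simp only [Set.mem_Icc, Prod.le_def] at hp
    exact ⟨⟨hp.1.1, hp.2.1⟩, ⟨hp.1.2, hp.2.2⟩⟩
  have hHcont : ContinuousOn (fun p : ℝ × ℝ => copDens C12 p.1 p.2 *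
      pdFst C132 (cond12 C12 p.1 p.2) (cond32 C23 u3 p.2))
      (Icc ((0 : ℝ), (0 : ℝ)) (1, 1)) := by
    have h1 : ContinuousOn (fun p : ℝ × ℝ => copDens C12 p.1 p.2)
        (Icc ((0 : ℝ), (0 : ℝ)) (1, 1)) := (vineAux_contOn_copDens hU h12).mono hUsub
    have hcond12 : ContinuousOn (fun p : ℝ × ℝ => cond12 C12 p.1 p.2)
        (Icc ((0 : ℝ), (0 : ℝ)) (1, 1)) :=
      ((vineAux_contOn_fderiv_apply hU h12 (0, 1)).mono hUsub).congr fun p hp =>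
        vineAux_cond12_eq hU h12 (hUsub hp)
    have hcond32 : ContinuousOn (fun p : ℝ × ℝ => cond32 C23 u3 p.2)
        (Icc ((0 : ℝ), (0 : ℝ)) (1, 1)) := by
      have hmm : ∀ p ∈ Icc ((0 : ℝ), (0 : ℝ)) (1, 1), ((p.2 : ℝ), u3) ∈ U :=
        fun p hp => hmem (hKmem p hp).2 hu3
      have h2 : ContinuousOn (fun p : ℝ × ℝ => fderiv ℝ C23 (p.2, u3) ((1:ℝ), (0:ℝ)))
          (Icc ((0 : ℝ), (0 : ℝ)) (1, 1)) :=
        (vineAux_contOn_fderiv_apply hU h23 (1, 0)).comp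
          ((continuous_snd.prodMk continuous_const).continuousOn) hmm
      exact h2.congr fun p hp => vineAux_cond32_eq hU h23 (hmm p hp)
    have hψmaps : ∀ p ∈ Icc ((0 : ℝ), (0 : ℝ)) (1, 1),
        ((cond12 C12 p.1 p.2, cond32 C23 u3 p.2) : ℝ × ℝ) ∈ U := fun p hp =>
      hmem (hr12 _ (hKmem p hp).1 _ (hKmem p hp).2) (hr32 u3 hu3 _ (hKmem p hp).2)
    have h2 : ContinuousOn
        (fun p : ℝ × ℝ => pdFst C132 (cond12 C12 p.1 p.2) (cond32 C23 u3 p.2))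
        (Icc ((0 : ℝ), (0 : ℝ)) (1, 1)) := by
      have := (vineAux_contOn_fderiv_apply hU h132 (1, 0)).comp
        (hcond12.prodMk hcond32) hψmaps
      exact this.congr fun p hp => vineAux_pdFst_eq hU h132 (hψmaps p hp)
    exact h1.mul h2
  -- Step 3: extend continuously to all of ℝ² (Tietze)
  obtain ⟨G, hG⟩ := ContinuousMap.exists_restrict_eq
    (isClosed_Icc (a := ((0 : ℝ), (0 : ℝ))) (b := (1, 1)))
    ⟨_, hHcont.restrict⟩
  have hG' : ∀ p ∈ Icc ((0 : ℝ), (0 : ℝ)) (1, 1),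
      G p = copDens C12 p.1 p.2 *
        pdFst C132 (cond12 C12 p.1 p.2) (cond32 C23 u3 p.2) := by
    intro p hp
    exact congrFun (congrArg DFunLike.coe hG) (⟨p, hp⟩ : Icc ((0 : ℝ), (0 : ℝ)) (1, 1))
  -- Step 4: continuity of the parametric integral
  have hFicc : Continuous fun v1 => ∫ v2 in Icc (0:ℝ) u2, G (v1, v2) := by
    exact continuous_parametric_integral_of_continuous
      (f := fun (a b : ℝ) => G (a, b)) (by exact G.continuous) isCompact_Icc
  have hFint : ∀ v1 : ℝ, (∫ v2 in (0:ℝ)..u2, G (v1, v2)) =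
      ∫ v2 in Icc (0:ℝ) u2, G (v1, v2) := fun v1 => by
    rw [intervalIntegral.integral_of_le hu2.1, ← integral_Icc_eq_integral_Ioc]
  have hFcont : Continuous fun v1 => ∫ v2 in (0:ℝ)..u2, G (v1, v2) := by
    have := hFicc.congr fun v1 => (hFint v1).symm
    simpa using this
  -- Step 5: the middle integral agrees with the extended integrand
  have hFeq : ∀ v1 ∈ Icc (0:ℝ) 1,
      (∫ v2 in (0:ℝ)..u2, ∫ v3 in (0:ℝ)..u3, copDens C12 v1 v2 * copDens C23 v2 v3 *
        copDens C132 (cond12 C12 v1 v2) (cond32 C23 v3 v2))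
      = ∫ v2 in (0:ℝ)..u2, G (v1, v2) := by
    intro v1 hv1
    apply intervalIntegral.integral_congr
    intro v2 hv2
    have hv2' : v2 ∈ Icc (0:ℝ) 1 := by
      rw [uIcc_of_le hu2.1] at hv2; exact ⟨hv2.1, hv2.2.trans hu2.2⟩
    exact (hFTC v1 hv1 v2 hv2').trans (hG' (v1, v2) (hmemK hv1 hv2')).symm
  -- Step 6: conclude
  have hEv : (fun a => vine C12 C23 C132 a u2 u3) =ᶠ[nhds u1]
      fun a => ∫ v1 in (0:ℝ)..a, ∫ v2 in (0:ℝ)..u2, G (v1, v2) := by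
    filter_upwards [Ioo_mem_nhds hu1.1 hu1.2] with a ha
    rw [vine]
    apply intervalIntegral.integral_congr
    intro v1 hv1
    have hv1' : v1 ∈ Icc (0:ℝ) 1 := by
      rw [uIcc_of_le ha.1.le] at hv1; exact ⟨hv1.1, hv1.2.trans ha.2.le⟩
    exact hFeq v1 hv1'
  rw [hEv.deriv_eq, Continuous.deriv_integral _ hFcont]
  apply intervalIntegral.integral_congr
  intro v2 hv2
  have hv2' : v2 ∈ Icc (0:ℝ) 1 := by
    rw [uIcc_of_le hu2.1] at hv2; exact ⟨hv2.1, hv2.2.trans hu2.2⟩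
  exact (hG' (u1, v2) (hmemK hu1' hv2')).trans (mul_comm _ _)

end
end
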